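/- Let Γ = Cay(G, S) be a Cayley digraph of a finite group G such that R(G) is normal in Aut(Γ). Then Γ is a CI-digraph if and only if R(G) is the unique regular subgroup of Aut(Γ) isomorphic to G. -/

import Mathlib

/-- The automorphism group of the Cayley digraph `Cay(G,S)`, as a subgroup of `Sym(G)`. -/
def cayleyAut (G : Type*) [Group G] (S : Set G) : Subgroup (Equiv.Perm G) where
  carrier := {f | ∀ x y : G, y * x⁻¹ ∈ S ↔ f y * (f x)⁻¹ ∈ S}
  one_mem' := by intro x y; rfl
  mul_mem' := by
    intro f g hf hg x y
    exact (hg x y).trans (hf (g x) (g y))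
  inv_mem' := by
    intro f hf x y
    have h := hf (f⁻¹ x) (f⁻¹ y)
    simpa using h.symm

/-- The right regular representation of `G` in `Sym(G)`, as a homomorphism. -/
def rightRegHom (G : Type*) [Group G] : G →* Equiv.Perm G where
  toFun g := Equiv.mulRight g⁻¹
  map_one' := by ext x; simp
  map_mul' a b := by ext x; simp [mul_assoc]

/-- The subgroup `R(G) ≤ Sym(G)` of all right translations. -/
def rightRegRep (G : Type*) [Group G] : Subgroup (Equiv.Perm G) := (rightRegHom G).range

/-- `S` is a CI-subset of `G` (equivalently `Cay(G,S)` is a CI-digraph): whenever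
`Cay(G,S) ≅ Cay(G,T)` for `T ⊆ G \ {1}`, some automorphism of `G` maps `S` to `T`. -/
def IsCISubset (G : Type*) [Group G] (S : Set G) : Prop :=
  ∀ T : Set G, (1 : G) ∉ T →
    (∃ e : Equiv.Perm G, ∀ x y : G, y * x⁻¹ ∈ S ↔ e y * (e x)⁻¹ ∈ T) →
    ∃ σ : G ≃* G, ⇑σ '' S = T

lemma rightRegHom_injective (G : Type*) [Group G] : Function.Injective (rightRegHom G) := by
  intro a b h
  have h1 := congrArg (fun p : Equiv.Perm G => p 1) h
  simp [rightRegHom] at h1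
  exact h1

lemma mem_rightRegRep {G : Type*} [Group G] {f : Equiv.Perm G} :
    f ∈ rightRegRep G ↔ ∃ g : G, Equiv.mulRight g = f := by
  rw [rightRegRep, MonoidHom.mem_range]
  constructor
  · rintro ⟨g, rfl⟩; exact ⟨g⁻¹, rfl⟩
  · rintro ⟨g, rfl⟩; exact ⟨g⁻¹, by simp [rightRegHom]⟩

@[simp] lemma Equiv.Perm.apply_inv_self {α : Type*} (f : Equiv.Perm α) (x : α) : f (f⁻¹ x) = x :=
  f.apply_symm_apply x

@[simp] lemma Equiv.Perm.inv_apply_self {α : Type*} (f : Equiv.Perm α) (x : α) : f⁻¹ (f x) = x :=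
  f.symm_apply_apply x

/-- Let `Γ = Cay(G,S)` be a Cayley digraph of a finite group `G` such that `R(G)` is
normal in `Aut(Γ)`. Then `Γ` is a CI-digraph if and only if `R(G)` is the unique
regular subgroup of `Aut(Γ)` isomorphic to `G`. -/
theorem normal_cayley_CI_iff_unique_regular (G : Type*) [Group G] [Fintype G]
    (S : Set G) (hS : (1 : G) ∉ S)
    (hnormal : ∀ f ∈ cayleyAut G S, ∀ g : G, f * Equiv.mulRight g * f⁻¹ ∈ rightRegRep G) :
    IsCISubset G S ↔
      ∀ X : Subgroup (Equiv.Perm G), X ≤ cayleyAut G S →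
        (∀ x y : G, ∃! f : X, (f : Equiv.Perm G) x = y) →
        Nonempty (X ≃* G) → X = rightRegRep G := by
  constructor
  · -- CI → uniqueness
    intro hCI X hX hreg ⟨θ⟩
    set F : G → X := fun x => (hreg 1 x).choose with hFdef
    have hF : ∀ x : G, ((F x : Equiv.Perm G)) 1 = x := fun x => (hreg 1 x).choose_spec.1
    have hFu : ∀ (x : G) (f : X), (f : Equiv.Perm G) 1 = x → f = F x :=
      fun x f h => (hreg 1 x).choose_spec.2 f h
    set ev : G → G := fun x => (θ (F x))⁻¹ with hevdef
    have K2 : ∀ (f : X) (x : G), ev ((f : Equiv.Perm G) x) = ev x * (θ f)⁻¹ := by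
      intro f x
      have hfx : F ((f : Equiv.Perm G) x) = f * F x := by
        refine (hFu _ (f * F x) ?_).symm
        simp [Equiv.Perm.mul_apply, hF]
      simp only [hevdef, hfx, map_mul, mul_inv_rev]
    have hinj : Function.Injective ev := by
      intro a b h
      have : F a = F b := θ.injective (inv_injective h)
      rw [← hF a, ← hF b, this]
    have hsurj : Function.Surjective ev := by
      intro g
      refine ⟨((θ.symm g⁻¹ : X) : Equiv.Perm G) 1, ?_⟩
      have h8 : F (((θ.symm g⁻¹ : X) : Equiv.Perm G) 1) = θ.symm g⁻¹ := (hFu _ _ rfl).symm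
      show (θ (F _))⁻¹ = g
      rw [h8, MulEquiv.apply_symm_apply, inv_inv]
    set e : Equiv.Perm G := Equiv.ofBijective ev ⟨hinj, hsurj⟩ with hedef
    have hee : ∀ x, e x = ev x := fun x => rfl
    set T : Set G := {t | e.symm t * (e.symm 1)⁻¹ ∈ S} with hTdef
    have hT1 : (1 : G) ∉ T := by
      simp only [hTdef, Set.mem_setOf_eq, mul_inv_cancel]
      exact hS
    have he' : ∀ x y : G, y * x⁻¹ ∈ S ↔ e y * (e x)⁻¹ ∈ T := by
      intro x y
      set u := e.symm 1 with hu
      set a := e.symm (e y * (e x)⁻¹) with ha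
      set f : X := θ.symm ((ev x)⁻¹) with hf
      have hθf : θ f = (ev x)⁻¹ := θ.apply_symm_apply _
      have hfu : (f : Equiv.Perm G) u = x := by
        apply hinj
        rw [K2 f u, hθf]
        have h7 : ev u = 1 := by rw [← hee, hu]; exact e.apply_symm_apply 1
        rw [h7, one_mul, inv_inv]
      have hfa : (f : Equiv.Perm G) a = y := by
        apply hinj
        rw [K2 f a, hθf, inv_inv]
        have h6 : ev a = e y * (e x)⁻¹ := by rw [← hee, ha]; exact e.apply_symm_apply _
        rw [h6, ← hee x, ← hee y]
        group
      have hmem : a * u⁻¹ ∈ S ↔ (f : Equiv.Perm G) a * ((f : Equiv.Perm G) u)⁻¹ ∈ S :=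
        hX f.2 u a
      rw [hfa, hfu] at hmem
      have hiffT : (e y * (e x)⁻¹ ∈ T) ↔ a * u⁻¹ ∈ S := Iff.rfl
      rw [hiffT, ← hmem]
    obtain ⟨σ, hσ⟩ := hCI T hT1 ⟨e, he'⟩
    have hiffσ : ∀ z : G, z ∈ S ↔ σ z ∈ T := by
      intro z
      rw [← hσ]
      constructor
      · exact fun h => ⟨z, h, rfl⟩
      · rintro ⟨w, hw, hwz⟩
        rwa [← σ.injective hwz]
    set α : Equiv.Perm G := e.trans σ.symm.toEquiv with hα
    have hαapp : ∀ x, α x = σ.symm (e x) := fun x => rfl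
    have hαaut : α ∈ cayleyAut G S := by
      intro x y
      have h1 : α y * (α x)⁻¹ = σ.symm (e y * (e x)⁻¹) := by
        rw [hαapp, hαapp, ← map_inv, ← map_mul]
      rw [h1, he' x y]
      have h2 := hiffσ (σ.symm (e y * (e x)⁻¹))
      rw [MulEquiv.apply_symm_apply] at h2
      exact h2.symm
    have hXR : X ≤ rightRegRep G := by
      intro f0 hf0
      set f : X := ⟨f0, hf0⟩ with hfdef
      have hconj : α * f0 * α⁻¹ = Equiv.mulRight (σ.symm (θ f))⁻¹ := by
        ext x
        simp only [Equiv.Perm.mul_apply, Equiv.coe_mulRight]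
        have h2 : ev (f0 (α⁻¹ x)) = ev (α⁻¹ x) * (θ f)⁻¹ := K2 f (α⁻¹ x)
        have h3 : σ.symm (ev (α⁻¹ x)) = x := by
          have h4 : α (α⁻¹ x) = x := Equiv.Perm.apply_inv_self α x
          rw [hαapp, hee] at h4
          exact h4
        have h5 : σ.symm ((θ f)⁻¹) = (σ.symm (θ f))⁻¹ := map_inv σ.symm (θ f)
        calc α (f0 (α⁻¹ x)) = σ.symm (ev (f0 (α⁻¹ x))) := by rw [hαapp, hee]
          _ = σ.symm (ev (α⁻¹ x) * (θ f)⁻¹) := by rw [h2]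
          _ = σ.symm (ev (α⁻¹ x)) * σ.symm ((θ f)⁻¹) := map_mul σ.symm _ _
          _ = x * (σ.symm (θ f))⁻¹ := by rw [h3, h5]
      have hfeq : f0 = α⁻¹ * Equiv.mulRight (σ.symm (θ f))⁻¹ * (α⁻¹)⁻¹ := by
        rw [inv_inv, ← hconj]; group
      rw [hfeq]
      exact hnormal α⁻¹ (inv_mem hαaut) _
    have hcard : Nat.card (rightRegRep G) ≤ Nat.card X := by
      have h1 : Nat.card X = Nat.card G := Nat.card_congr θ.toEquiv
      have h2 : Nat.card (rightRegRep G) = Nat.card G :=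
        (Nat.card_congr (MonoidHom.ofInjective (rightRegHom_injective G)).toEquiv).symm
      rw [h1, h2]
    exact Subgroup.eq_of_le_of_card_ge hXR hcard
  · -- uniqueness → CI
    intro huniq T hT ⟨e, he⟩
    set X : Subgroup (Equiv.Perm G) :=
      (rightRegRep G).map (MulAut.conj e⁻¹).toMonoidHom with hXdef
    have hmemX : ∀ f : Equiv.Perm G, f ∈ X ↔ ∃ g : G, e⁻¹ * Equiv.mulRight g * e = f := by
      intro f
      rw [hXdef, Subgroup.mem_map]
      constructor
      · rintro ⟨r, hr, rfl⟩
        obtain ⟨g, rfl⟩ := mem_rightRegRep.mp hr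
        exact ⟨g, by simp [MulAut.conj_apply, mul_assoc]⟩
      · rintro ⟨g, rfl⟩
        exact ⟨Equiv.mulRight g, mem_rightRegRep.mpr ⟨g, rfl⟩,
          by simp [MulAut.conj_apply, mul_assoc]⟩
    have happ : ∀ (g : G) (x : G), (e⁻¹ * Equiv.mulRight g * e) x = e⁻¹ (e x * g) := by
      intro g x; simp [Equiv.Perm.mul_apply]
    have hXaut : X ≤ cayleyAut G S := by
      intro f hf
      obtain ⟨g, rfl⟩ := (hmemX f).mp hf
      intro x y
      rw [he x y, happ, happ]
      have h1 := he (e⁻¹ (e x * g)) (e⁻¹ (e y * g))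
      simp only [Equiv.Perm.apply_inv_self] at h1
      rw [h1]
      have h2 : e y * g * (e x * g)⁻¹ = e y * (e x)⁻¹ := by group
      rw [h2]
    have hXreg : ∀ x y : G, ∃! f : X, (f : Equiv.Perm G) x = y := by
      intro x y
      have hmem : e⁻¹ * Equiv.mulRight ((e x)⁻¹ * e y) * e ∈ X :=
        (hmemX _).mpr ⟨_, rfl⟩
      refine ⟨⟨_, hmem⟩, ?_, ?_⟩
      · show (e⁻¹ * Equiv.mulRight ((e x)⁻¹ * e y) * e) x = y
        rw [happ, mul_inv_cancel_left]
        exact Equiv.Perm.inv_apply_self e y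
      · rintro ⟨f, hf⟩ hfx
        obtain ⟨g, rfl⟩ := (hmemX f).mp hf
        have hfx' : e⁻¹ (e x * g) = y := by rw [← happ]; exact hfx
        have h9 : e (e⁻¹ (e x * g)) = e y := congrArg (⇑e) hfx'
        simp only [Equiv.Perm.apply_inv_self] at h9
        have h10 : g = (e x)⁻¹ * e y := by rw [← h9]; group
        subst h10
        rfl
    have hiso : Nonempty (X ≃* G) :=
      ⟨(Subgroup.equivMapOfInjective (rightRegRep G) (MulAut.conj e⁻¹).toMonoidHom
        (MulAut.conj e⁻¹).injective).symm.trans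
        (MonoidHom.ofInjective (rightRegHom_injective G)).symm⟩
    have hXR : X = rightRegRep G := huniq X hXaut hXreg hiso
    have key : ∀ z y : G, e (z * y⁻¹) = e z * (e y)⁻¹ * e 1 := by
      intro z y
      have hmem : Equiv.mulRight y⁻¹ ∈ X := by
        rw [hXR]; exact mem_rightRegRep.mpr ⟨y⁻¹, rfl⟩
      obtain ⟨g, hg⟩ := (hmemX _).mp hmem
      have hz : ∀ w : G, e⁻¹ (e w * g) = w * y⁻¹ := by
        intro w
        have h := congrArg (fun p : Equiv.Perm G => p w) hg
        simpa [Equiv.Perm.mul_apply] using h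
      have hy : e y * g = e 1 := by
        have h := hz y
        rw [mul_inv_cancel] at h
        have h2 := congrArg (⇑e) h
        simpa [Equiv.Perm.apply_inv_self] using h2
      have hgval : g = (e y)⁻¹ * e 1 := by rw [← hy]; group
      have h := congrArg (⇑e) (hz z)
      simp only [Equiv.Perm.apply_inv_self] at h
      rw [← h, hgval]
      group
    have hinv1 : ∀ y : G, e y⁻¹ = e 1 * (e y)⁻¹ * e 1 := by
      intro y
      have h := key 1 y
      simpa using h
    have hmul : ∀ x y : G, e (x * y) = e x * (e 1)⁻¹ * e y := by
      intro x y
      have h := key x y⁻¹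
      rw [inv_inv, hinv1 y] at h
      rw [h]
      group
    refine ⟨{ toEquiv := e.trans (Equiv.mulRight (e 1)⁻¹),
              map_mul' := ?_ }, ?_⟩
    · intro x y
      show e (x * y) * (e 1)⁻¹ = (e x * (e 1)⁻¹) * (e y * (e 1)⁻¹)
      rw [hmul x y]
      group
    · have hiff : ∀ s : G, s ∈ S ↔ e s * (e 1)⁻¹ ∈ T := by
        intro s
        have h := he 1 s
        simpa using h
      ext t
      constructor
      · rintro ⟨s, hs, rfl⟩
        exact (hiff s).mp hs
      · intro ht
        refine ⟨e.symm (t * e 1), ?_, ?_⟩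
        · rw [hiff]
          have : e (e.symm (t * e 1)) = t * e 1 := e.apply_symm_apply _
          rw [this]
          simpa using ht
        · show e (e.symm (t * e 1)) * (e 1)⁻¹ = t
          rw [e.apply_symm_apply]
          group
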